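/- Let C be cyclic of order 2^n, n ≥ 3, with involution ⊛ induced by a ↦ a^{2^{n-1}-1}. The element 1 + Ĉ² (the sum 1 plus the sum of all elements of C²) is not a square of any ⊛-unitary normalized unit, i.e., there is no x ∈ V(F_2 C) with x^⊛ = x^{-1} and x² = 1 + Ĉ². -/

import Mathlib

open MonoidAlgebra Finset

noncomputable section

/-- The cyclic group of order `2^n`, written multiplicatively. -/
abbrev Cgrp (n : ℕ) : Type := Multiplicative (ZMod (2 ^ n))

/-- The group algebra `F₂C` of the cyclic group of order `2^n` over the field of two elements. -/
abbrev FC (n : ℕ) : Type := MonoidAlgebra (ZMod 2) (Cgrp n)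

/-- The augmentation map `χ : F₂C → F₂`. -/
def aug (n : ℕ) : FC n →ₐ[ZMod 2] ZMod 2 :=
  MonoidAlgebra.lift (ZMod 2) (ZMod 2) (Cgrp n) 1

/-- The generator `a` of the cyclic group `C`. -/
def agen (n : ℕ) : Cgrp n := Multiplicative.ofAdd (1 : ZMod (2 ^ n))

/-- The generator `a` viewed inside the group algebra `F₂C`. -/
def A (n : ℕ) : FC n := MonoidAlgebra.of (ZMod 2) (Cgrp n) (agen n)

/-- Group elements of `C` as elements of the group algebra. -/
def Gel (n : ℕ) (i : ZMod (2 ^ n)) : FC n :=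
  MonoidAlgebra.of (ZMod 2) (Cgrp n) (Multiplicative.ofAdd i)

/-- The involution `*` of `F₂C` induced by `a ↦ a⁻¹`. -/
def starOne (n : ℕ) : FC n ≃ₐ[ZMod 2] FC n :=
  MonoidAlgebra.domCongr (ZMod 2) (ZMod 2) (MulEquiv.inv (Cgrp n))

/-- The scalar `2^(n-1) - 1` in `ZMod (2^n)`. -/
def cf (n : ℕ) : ZMod (2 ^ n) := 2 ^ (n - 1) - 1

lemma two_pow_zmod (n : ℕ) : ((2 : ZMod (2 ^ n))) ^ n = 0 := by
  have h : ((2 ^ n : ℕ) : ZMod (2 ^ n)) = 0 := ZMod.natCast_self _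
  push_cast at h
  exact h

lemma cf_sq (n : ℕ) (hn : 2 ≤ n) : cf n * cf n = 1 := by
  have h0 := two_pow_zmod n
  have e1 : (2 : ZMod (2 ^ n)) ^ (n - 1) * 2 ^ (n - 1) = 0 := by
    rw [← pow_add]
    have h : n - 1 + (n - 1) = n + (n - 2) := by omega
    rw [h, pow_add, h0, zero_mul]
  have e2 : (2 : ZMod (2 ^ n)) * 2 ^ (n - 1) = 0 := by
    have h : (2 : ZMod (2 ^ n)) * 2 ^ (n - 1) = 2 ^ (n - 1 + 1) := (pow_succ' 2 (n-1)).symm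
    rw [h]
    have h' : n - 1 + 1 = n := by omega
    rw [h', h0]
  have key : cf n * cf n = 2 ^ (n - 1) * 2 ^ (n - 1) - 2 * 2 ^ (n - 1) + 1 := by
    unfold cf; ring
  rw [key, e1, e2]; ring

/-- The automorphism `z ↦ (2^(n-1)-1)·z` of `ZMod (2^n)`. -/
def thetaAdd (n : ℕ) (hn : 2 ≤ n) : ZMod (2 ^ n) ≃+ ZMod (2 ^ n) where
  toFun z := cf n * z
  invFun z := cf n * z
  left_inv z := by show cf n * (cf n * z) = z; rw [← mul_assoc, cf_sq n hn, one_mul]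
  right_inv z := by show cf n * (cf n * z) = z; rw [← mul_assoc, cf_sq n hn, one_mul]
  map_add' x y := mul_add _ _ _

/-- The automorphism `a ↦ a^(2^(n-1)-1)` of `C`. -/
def theta (n : ℕ) (hn : 2 ≤ n) : Cgrp n ≃* Cgrp n :=
  AddEquiv.toMultiplicative (thetaAdd n hn)

/-- The involution `⊛` of `F₂C` induced by `a ↦ a^(2^(n-1)-1)`. -/
def starTwo (n : ℕ) (hn : 2 ≤ n) : FC n ≃ₐ[ZMod 2] FC n :=
  MonoidAlgebra.domCongr (ZMod 2) (ZMod 2) (theta n hn)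

/-- The group `V(F₂C)` of normalized units, as a subgroup of the unit group of `F₂C`. -/
def Vgrp (n : ℕ) : Subgroup (FC n)ˣ where
  carrier := {u | aug n (↑u : FC n) = 1}
  one_mem' := by simp [Set.mem_setOf_eq]
  mul_mem' := by
    intro u v hu hv
    simp only [Set.mem_setOf_eq, Units.val_mul, map_mul] at *
    rw [hu, hv, one_mul]
  inv_mem' := by
    intro u hu
    simp only [Set.mem_setOf_eq] at *
    have h : aug n ((↑u : FC n) * (↑u⁻¹ : FC n)) = 1 := by
      rw [Units.mul_inv, map_one]
    rw [map_mul, hu, one_mul] at h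
    exact h

/-- The sum `Ĉ` of all elements of `C` inside the group algebra. -/
def hatC (n : ℕ) : FC n := ∑ g : Cgrp n, MonoidAlgebra.of (ZMod 2) (Cgrp n) g

/-- The sum `Ĉ²` of all elements of the subgroup `C²` of squares. -/
def hatCsq (n : ℕ) : FC n :=
  ∑ g ∈ Finset.image (fun h : Cgrp n => h * h) Finset.univ,
    MonoidAlgebra.of (ZMod 2) (Cgrp n) g

/-- The subspace `F₂C²` of `F₂C` spanned by the subgroup of squares. -/
def sqSpan (n : ℕ) : Submodule (ZMod 2) (FC n) :=
  Submodule.span (ZMod 2) (Set.range fun g : Cgrp n => MonoidAlgebra.of (ZMod 2) (Cgrp n) (g * g))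

lemma hatC_mul_hatC (n : ℕ) (hn : 1 ≤ n) : hatC n * hatC n = 0 := by
  classical
  unfold hatC
  rw [Finset.sum_mul_sum]
  have h1 : ∀ g : Cgrp n,
      ∑ h : Cgrp n, MonoidAlgebra.of (ZMod 2) (Cgrp n) g * MonoidAlgebra.of (ZMod 2) (Cgrp n) h
        = hatC n := by
    intro g
    have h2 : ∀ h : Cgrp n,
        MonoidAlgebra.of (ZMod 2) (Cgrp n) g * MonoidAlgebra.of (ZMod 2) (Cgrp n) h
          = MonoidAlgebra.of (ZMod 2) (Cgrp n) (g * h) := by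
      intro h; rw [map_mul]
    unfold hatC
    calc ∑ h : Cgrp n, MonoidAlgebra.of (ZMod 2) (Cgrp n) g * MonoidAlgebra.of (ZMod 2) (Cgrp n) h
        = ∑ h : Cgrp n, MonoidAlgebra.of (ZMod 2) (Cgrp n) (g * h) := by
          exact Finset.sum_congr rfl fun h _ => h2 h
      _ = ∑ h : Cgrp n, MonoidAlgebra.of (ZMod 2) (Cgrp n) h :=
          Fintype.sum_equiv (Equiv.mulLeft g) _ _ (fun h => rfl)
  calc (∑ g : Cgrp n, ∑ h : Cgrp n,
        MonoidAlgebra.of (ZMod 2) (Cgrp n) g * MonoidAlgebra.of (ZMod 2) (Cgrp n) h)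
      = ∑ _g : Cgrp n, hatC n := Finset.sum_congr rfl fun g _ => h1 g
    _ = (Fintype.card (Cgrp n)) • hatC n := by rw [Finset.sum_const, Finset.card_univ]
    _ = 0 := by
        rw [← Nat.cast_smul_eq_nsmul (ZMod 2)]
        have hc : ((Fintype.card (Cgrp n) : ℕ) : ZMod 2) = 0 := by
          have : Fintype.card (Cgrp n) = 2 ^ n := by simp [Cgrp, ZMod.card]
          rw [this]
          push_cast
          rw [show ((2:ZMod 2) = 0) from rfl, zero_pow (by omega)]
        rw [hc, zero_smul]

lemma add_self_FC (n : ℕ) (x : FC n) : x + x = 0 := by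
  rw [← two_smul (ZMod 2) x, show ((2:ZMod 2) = 0) from rfl, zero_smul]

/-- `1 + Ĉ` as a unit of `F₂C` (it is its own inverse). -/
def uC (n : ℕ) (hn : 1 ≤ n) : (FC n)ˣ :=
  ⟨1 + hatC n, 1 + hatC n, by
    have h : (1 + hatC n) * (1 + hatC n) = 1 + (hatC n + hatC n) + hatC n * hatC n := by ring
    rw [h, add_self_FC, hatC_mul_hatC n hn, add_zero, add_zero], by
    have h : (1 + hatC n) * (1 + hatC n) = 1 + (hatC n + hatC n) + hatC n * hatC n := by ring
    rw [h, add_self_FC, hatC_mul_hatC n hn, add_zero, add_zero]⟩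



section Aux9

/-- From `2·d = 0` in `ZMod (2^n)` with `n ≥ 2`, the value of `d` is even. -/
lemma zmod_val_even_of_double_zero (n : ℕ) (hn : 2 ≤ n) (d : ZMod (2 ^ n))
    (h : d + d = 0) : ∃ m : ℕ, d.val = 2 * m := by
  haveI : NeZero (2 ^ n) := ⟨pow_ne_zero n two_ne_zero⟩
  have hval : (d + d).val = 0 := by rw [h, ZMod.val_zero]
  rw [ZMod.val_add] at hval
  obtain ⟨t, ht⟩ := Nat.dvd_of_mod_eq_zero hval
  have hpow : (2 : ℕ) ^ n = 2 * 2 ^ (n - 1) := by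
    rw [← pow_succ']; congr 1; omega
  have e : 2 * d.val = 2 * (2 ^ (n - 1) * t) := by
    rw [← mul_assoc, ← hpow, ← ht]; ring
  have e2 : d.val = 2 ^ (n - 1) * t := Nat.eq_of_mul_eq_mul_left (by norm_num) e
  have hpow2 : (2 : ℕ) ^ (n - 1) = 2 * 2 ^ (n - 2) := by
    rw [← pow_succ']; congr 1; omega
  exact ⟨2 ^ (n - 2) * t, by rw [e2, hpow2, mul_assoc]⟩

/-- If `2z = 4w` in `ZMod (2^n)`, `n ≥ 2`, then `z` is a double. -/
lemma zmod_even_of_double (n : ℕ) (hn : 2 ≤ n) (z w : ZMod (2 ^ n))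
    (h : z + z = w + w + (w + w)) : ∃ v : ZMod (2 ^ n), z = v + v := by
  haveI : NeZero (2 ^ n) := ⟨pow_ne_zero n two_ne_zero⟩
  have h2 : (z - (w + w)) + (z - (w + w)) = 0 := by linear_combination h
  obtain ⟨m, hm⟩ := zmod_val_even_of_double_zero n hn _ h2
  have hcast : (((z - (w + w)).val : ℕ) : ZMod (2 ^ n)) = z - (w + w) := by
    rw [ZMod.natCast_val, ZMod.cast_id]
  have hdm : z - (w + w) = (m : ZMod (2 ^ n)) + m := by
    rw [← hcast, hm]; push_cast; ring
  exact ⟨w + m, by linear_combination hdm⟩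

/-- The subgroup of squares of `C` as a `Finset`. -/
def Efin (n : ℕ) : Finset (Cgrp n) := Finset.image (fun h : Cgrp n => h * h) Finset.univ

/-- The subgroup of fourth powers of `C` as a `Finset`. -/
def S4fin (n : ℕ) : Finset (Cgrp n) := Finset.image (fun h : Cgrp n => h * h) (Efin n)

lemma mem_Efin (n : ℕ) (g : Cgrp n) : g ∈ Efin n ↔ ∃ h, h * h = g := by
  simp [Efin]

lemma mem_S4fin (n : ℕ) (g : Cgrp n) : g ∈ S4fin n ↔ ∃ h, (h * h) * (h * h) = g := by
  unfold S4fin Efin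
  rw [Finset.image_image]
  simp [Function.comp]

lemma Efin_mul_mem (n : ℕ) {a b : Cgrp n} (ha : a ∈ Efin n) (hb : b ∈ Efin n) :
    a * b ∈ Efin n := by
  rw [mem_Efin] at ha hb ⊢
  obtain ⟨h1, rfl⟩ := ha
  obtain ⟨h2, rfl⟩ := hb
  exact ⟨h1 * h2, mul_mul_mul_comm h1 h2 h1 h2⟩

lemma Efin_inv_mem (n : ℕ) {a : Cgrp n} (ha : a ∈ Efin n) : a⁻¹ ∈ Efin n := by
  rw [mem_Efin] at ha ⊢
  obtain ⟨h, rfl⟩ := ha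
  exact ⟨h⁻¹, (mul_inv h h).symm⟩

lemma S4fin_mul_mem (n : ℕ) {a b : Cgrp n} (ha : a ∈ S4fin n) (hb : b ∈ S4fin n) :
    a * b ∈ S4fin n := by
  rw [mem_S4fin] at ha hb ⊢
  obtain ⟨h1, rfl⟩ := ha
  obtain ⟨h2, rfl⟩ := hb
  refine ⟨h1 * h2, ?_⟩
  rw [mul_mul_mul_comm h1 h2 h1 h2, mul_mul_mul_comm (h1*h1) (h2*h2) (h1*h1) (h2*h2)]

lemma one_mem_S4fin (n : ℕ) : (1 : Cgrp n) ∈ S4fin n := by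
  rw [mem_S4fin]; exact ⟨1, by simp⟩

/-- The additive generator `2^(n-1)` of the kernel of doubling. -/
def Tval (n : ℕ) : ZMod (2 ^ n) := ((2 ^ (n - 1) : ℕ) : ZMod (2 ^ n))

/-- The element of order two of `C`. -/
def tau (n : ℕ) : Cgrp n := Multiplicative.ofAdd (Tval n)

lemma Tval_add_self (n : ℕ) (hn : 1 ≤ n) : Tval n + Tval n = 0 := by
  have h : (2 ^ (n - 1) + 2 ^ (n - 1) : ℕ) = 2 ^ n := by
    rw [← two_mul, ← pow_succ']; congr 1; omega
  unfold Tval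
  rw [← Nat.cast_add, h, ZMod.natCast_self]

lemma Tval_ne_zero (n : ℕ) (hn : 1 ≤ n) : Tval n ≠ 0 := by
  haveI : NeZero (2 ^ n) := ⟨pow_ne_zero n two_ne_zero⟩
  have hlt : (2 : ℕ) ^ (n - 1) < 2 ^ n := Nat.pow_lt_pow_right one_lt_two (by omega)
  have hval : (Tval n).val = 2 ^ (n - 1) := ZMod.val_cast_of_lt hlt
  intro h
  rw [h, ZMod.val_zero] at hval
  exact (pow_ne_zero (n - 1) two_ne_zero) hval.symm

lemma tau_mul_self (n : ℕ) (hn : 1 ≤ n) : tau n * tau n = 1 := by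
  have : tau n * tau n = Multiplicative.ofAdd (Tval n + Tval n) := rfl
  rw [this, Tval_add_self n hn, ofAdd_zero]

lemma tau_ne_one (n : ℕ) (hn : 1 ≤ n) : tau n ≠ 1 := by
  intro h
  exact Tval_ne_zero n hn (by simpa [tau] using h)

lemma tau_mem_Efin (n : ℕ) (hn : 2 ≤ n) : tau n ∈ Efin n := by
  rw [mem_Efin]
  refine ⟨Multiplicative.ofAdd ((2 ^ (n - 2) : ℕ) : ZMod (2 ^ n)), ?_⟩
  have hnat : ((2 : ℕ) ^ (n - 2) + 2 ^ (n - 2)) = 2 ^ (n - 1) := by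
    rw [← two_mul, ← pow_succ']; congr 1; omega
  have key : ((2 ^ (n - 2) : ℕ) : ZMod (2 ^ n)) + ((2 ^ (n - 2) : ℕ) : ZMod (2 ^ n))
      = Tval n := by
    unfold Tval; rw [← hnat]; push_cast; ring
  exact congrArg Multiplicative.ofAdd key

lemma tau_mem_S4fin (n : ℕ) (hn : 3 ≤ n) : tau n ∈ S4fin n := by
  rw [mem_S4fin]
  refine ⟨Multiplicative.ofAdd ((2 ^ (n - 3) : ℕ) : ZMod (2 ^ n)), ?_⟩
  have hnat : ((2 : ℕ) ^ (n - 3) + 2 ^ (n - 3) + (2 ^ (n - 3) + 2 ^ (n - 3))) = 2 ^ (n - 1) := by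
    have h4 : (2 : ℕ) ^ (n - 3) + 2 ^ (n - 3) + (2 ^ (n - 3) + 2 ^ (n - 3))
        = 2 ^ 2 * 2 ^ (n - 3) := by ring
    rw [h4, ← pow_add]; congr 1; omega
  have key : (((2 ^ (n - 3) : ℕ) : ZMod (2 ^ n)) + ((2 ^ (n - 3) : ℕ) : ZMod (2 ^ n)))
      + (((2 ^ (n - 3) : ℕ) : ZMod (2 ^ n)) + ((2 ^ (n - 3) : ℕ) : ZMod (2 ^ n))) = Tval n := by
    unfold Tval; rw [← hnat]; push_cast; ring
  exact congrArg Multiplicative.ofAdd key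

lemma sq_mem_S4fin_iff (n : ℕ) (hn : 2 ≤ n) (g : Cgrp n) :
    g * g ∈ S4fin n ↔ g ∈ Efin n := by
  constructor
  · intro hk
    rw [mem_S4fin] at hk
    obtain ⟨h, hh⟩ := hk
    have h' := congrArg Multiplicative.toAdd hh
    simp only [toAdd_mul] at h'
    obtain ⟨v, hv⟩ := zmod_even_of_double n hn (Multiplicative.toAdd g)
      (Multiplicative.toAdd h) h'.symm
    rw [mem_Efin]
    refine ⟨Multiplicative.ofAdd v, ?_⟩
    have : g = Multiplicative.ofAdd (v + v) := by
      rw [← hv]; exact (ofAdd_toAdd g).symm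
    rw [this]; rfl
  · intro hg
    rw [mem_Efin] at hg
    obtain ⟨h, rfl⟩ := hg
    rw [mem_S4fin]
    exact ⟨h, rfl⟩

/-- The map `θ` as a bare function. -/
def thetaFun (n : ℕ) (g : Cgrp n) : Cgrp n :=
  Multiplicative.ofAdd (cf n * Multiplicative.toAdd g)

lemma thetaFun_one (n : ℕ) : thetaFun n 1 = 1 := by
  unfold thetaFun
  rw [toAdd_one, mul_zero, ofAdd_zero]

lemma thetaFun_mul (n : ℕ) (a b : Cgrp n) :
    thetaFun n (a * b) = thetaFun n a * thetaFun n b := by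
  unfold thetaFun
  rw [toAdd_mul, mul_add]
  rfl

lemma thetaFun_thetaFun (n : ℕ) (hn : 2 ≤ n) (g : Cgrp n) :
    thetaFun n (thetaFun n g) = g := by
  unfold thetaFun
  rw [toAdd_ofAdd, ← mul_assoc, cf_sq n hn, one_mul,
    ofAdd_toAdd]

lemma thetaFun_mem_Efin (n : ℕ) {g : Cgrp n} (hg : g ∈ Efin n) :
    thetaFun n g ∈ Efin n := by
  rw [mem_Efin] at hg ⊢
  obtain ⟨h, rfl⟩ := hg
  exact ⟨thetaFun n h, (thetaFun_mul n h h).symm⟩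

lemma starTwo_apply (n : ℕ) (hn : 2 ≤ n) (f : FC n) (h : Cgrp n) :
    (starTwo n hn f).coeff h = f.coeff (thetaFun n h) := by
  unfold starTwo
  rw [MonoidAlgebra.coeff_domCongr]
  rfl

end Aux9

/-- For `C` cyclic of order `2^n`, `n ≥ 3`, the element `1 + Ĉ²` is not the square of any
`⊛`-unitary normalized unit: there is no `x ∈ V(F₂C)` with `x^⊛ = x⁻¹` and `x² = 1 + Ĉ²`. -/
theorem stmt9 (n : ℕ) (hn : 3 ≤ n) :
    ¬ ∃ x : (FC n)ˣ, aug n (↑x : FC n) = 1 ∧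
        starTwo n (by omega) (↑x : FC n) = (↑x⁻¹ : FC n) ∧
        (↑x : FC n) ^ 2 = 1 + hatCsq n := by
  rintro ⟨x, haug, hstar, hsq⟩
  have hn2 : 2 ≤ n := by omega
  have hn1 : 1 ≤ n := by omega
  haveI : CharP (FC n) 2 := charP_of_injective_algebraMap' (ZMod 2) (A := FC n) 2
  set u : FC n := (↑x : FC n) with hu
  have hstar' : starTwo n hn2 u = (↑x⁻¹ : FC n) := hstar
  have hsq' : u * u = 1 + hatCsq n := by rw [← pow_two]; exact hsq
  have hmulself : ∀ a : ZMod 2, a * a = a := by decide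
  have hatCsq_eq : hatCsq n = ∑ k ∈ Efin n, MonoidAlgebra.single k (1 : ZMod 2) := by
    unfold hatCsq Efin
    exact Finset.sum_congr rfl fun k _ => MonoidAlgebra.of_apply (ZMod 2) (Cgrp n) k
  -- Frobenius: u * u = ∑ g, single (g*g) (u g)
  have hu_repr : u = ∑ g : Cgrp n, MonoidAlgebra.single g (u.coeff g) := by
    ext h
    rw [MonoidAlgebra.coeff_sum, Finset.sum_apply']
    simp [MonoidAlgebra.coeff_single, Finsupp.single_apply, Finset.sum_ite_eq]
  have hsq2 : u * u = ∑ g : Cgrp n, MonoidAlgebra.single (g * g) (u.coeff g) := by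
    conv_lhs => rw [hu_repr]
    rw [CharTwo.sum_mul_self]
    refine Finset.sum_congr rfl fun g _ => ?_
    rw [MonoidAlgebra.single_mul_single, hmulself]
  -- Key 1 : the sum of the coefficients of u over the squares is 1
  have key1 : ∑ g ∈ Efin n, u.coeff g = 1 := by
    have hL : ∑ h ∈ S4fin n, (u * u).coeff h = ∑ g ∈ Efin n, u.coeff g := by
      calc ∑ h ∈ S4fin n, (u * u).coeff h
          = ∑ h ∈ S4fin n, ∑ g : Cgrp n,
              (MonoidAlgebra.single (g * g) (u.coeff g) : FC n).coeff h := by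
            refine Finset.sum_congr rfl fun h _ => ?_
            rw [hsq2, MonoidAlgebra.coeff_sum, Finset.sum_apply']
        _ = ∑ g : Cgrp n, ∑ h ∈ S4fin n,
              (MonoidAlgebra.single (g * g) (u.coeff g) : FC n).coeff h := Finset.sum_comm
        _ = ∑ g : Cgrp n, (if g * g ∈ S4fin n then u.coeff g else 0) := by
            refine Finset.sum_congr rfl fun g _ => ?_
            simp [MonoidAlgebra.coeff_single, Finsupp.single_apply, Finset.sum_ite_eq]
        _ = ∑ g : Cgrp n, (if g ∈ Efin n then u.coeff g else 0) := by
            refine Finset.sum_congr rfl fun g _ => ?_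
            exact if_congr (sq_mem_S4fin_iff n hn2 g) rfl rfl
        _ = ∑ g ∈ Finset.univ ∩ Efin n, u.coeff g := Finset.sum_ite_mem _ _ _
        _ = ∑ g ∈ Efin n, u.coeff g := by rw [Finset.univ_inter]
    have hR : ∑ h ∈ S4fin n, ((1 : FC n) + hatCsq n).coeff h = 1 := by
      have h1 : ∑ h ∈ S4fin n, (1 : FC n).coeff h = 1 := by
        rw [MonoidAlgebra.one_def]
        simp only [MonoidAlgebra.coeff_single, Finsupp.single_apply]
        rw [Finset.sum_ite_eq, if_pos (one_mem_S4fin n)]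
      have h2 : ∑ h ∈ S4fin n, (hatCsq n).coeff h = 0 := by
        have : ∑ h ∈ S4fin n, (hatCsq n).coeff h
            = ∑ k ∈ Efin n, (if k ∈ S4fin n then (1 : ZMod 2) else 0) := by
          calc ∑ h ∈ S4fin n, (hatCsq n).coeff h
              = ∑ h ∈ S4fin n, ∑ k ∈ Efin n,
                  (MonoidAlgebra.single k (1 : ZMod 2) : FC n).coeff h := by
                refine Finset.sum_congr rfl fun h _ => ?_
                rw [hatCsq_eq, MonoidAlgebra.coeff_sum, Finset.sum_apply']
            _ = ∑ k ∈ Efin n, ∑ h ∈ S4fin n,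
                  (MonoidAlgebra.single k (1 : ZMod 2) : FC n).coeff h := Finset.sum_comm
            _ = ∑ k ∈ Efin n, (if k ∈ S4fin n then (1 : ZMod 2) else 0) := by
                refine Finset.sum_congr rfl fun k _ => ?_
                simp [MonoidAlgebra.coeff_single, Finsupp.single_apply, Finset.sum_ite_eq]
        rw [this]
        refine Finset.sum_involution (fun a _ => a * tau n) ?_ ?_ ?_ ?_
        · intro a _
          have hiff : a ∈ S4fin n ↔ a * tau n ∈ S4fin n := by
            constructor
            · intro h; exact S4fin_mul_mem n h (tau_mem_S4fin n hn)
            · intro h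
              have := S4fin_mul_mem n h (tau_mem_S4fin n hn)
              rwa [mul_assoc, tau_mul_self n hn1, mul_one] at this
          rw [if_congr hiff rfl rfl]
          exact CharTwo.add_self_eq_zero _
        · intro a _ _
          intro heq
          apply tau_ne_one n hn1
          have : a * tau n = a * 1 := by rw [mul_one]; exact heq
          exact mul_left_cancel this
        · intro a ha
          exact Efin_mul_mem n ha (tau_mem_Efin n hn2)
        · intro a _
          show a * tau n * tau n = a
          rw [mul_assoc, tau_mul_self n hn1, mul_one]
      calc ∑ h ∈ S4fin n, ((1 : FC n) + hatCsq n).coeff h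
          = ∑ h ∈ S4fin n, ((1 : FC n).coeff h + (hatCsq n).coeff h) :=
            Finset.sum_congr rfl fun h _ => by rw [MonoidAlgebra.coeff_add, Finsupp.add_apply]
        _ = (∑ h ∈ S4fin n, (1 : FC n).coeff h) + ∑ h ∈ S4fin n, (hatCsq n).coeff h :=
            Finset.sum_add_distrib
        _ = 1 := by rw [h1, h2, add_zero]
    have := hL.symm.trans (by rw [hsq'] : ∑ h ∈ S4fin n, (u * u).coeff h
      = ∑ h ∈ S4fin n, ((1 : FC n) + hatCsq n).coeff h)
    rw [hR] at this
    exact this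
  -- the unitary condition
  set s : FC n := starTwo n hn2 u with hs
  have hinv : u * s = 1 := by rw [hstar']; exact x.mul_inv
  have h1 : u * (u + s) = hatCsq n := by
    rw [mul_add, hsq', hinv]
    linear_combination (add_self_FC n 1)
  have hmain : u + s = s * hatCsq n := by
    calc u + s = (s * u) * (u + s) := by rw [mul_comm s u, hinv, one_mul]
      _ = s * (u * (u + s)) := by ring
      _ = s * hatCsq n := by rw [h1]
  -- evaluate both sides at 1
  have hs_apply : ∀ h : Cgrp n, s.coeff h = u.coeff (thetaFun n h) := fun h => starTwo_apply n hn2 u h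
  have lhs0 : (u + s).coeff (1 : Cgrp n) = 0 := by
    rw [MonoidAlgebra.coeff_add, Finsupp.add_apply, hs_apply, thetaFun_one]
    exact CharTwo.add_self_eq_zero _
  have rhs1 : (s * hatCsq n).coeff (1 : Cgrp n) = 1 := by
    have hexp : s * hatCsq n = ∑ k ∈ Efin n, s * MonoidAlgebra.single k (1 : ZMod 2) := by
      rw [hatCsq_eq, Finset.mul_sum]
    calc (s * hatCsq n).coeff (1 : Cgrp n)
        = ∑ k ∈ Efin n, (s * MonoidAlgebra.single k (1 : ZMod 2)).coeff (1 : Cgrp n) := by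
          rw [hexp, MonoidAlgebra.coeff_sum, Finset.sum_apply']
      _ = ∑ k ∈ Efin n, u.coeff (thetaFun n k⁻¹) := by
          refine Finset.sum_congr rfl fun k _ => ?_
          rw [MonoidAlgebra.coeff_mul_single_apply, one_mul, mul_one, hs_apply]
      _ = ∑ k ∈ Efin n, u.coeff k := by
          refine Finset.sum_nbij' (fun k => thetaFun n k⁻¹) (fun k => (thetaFun n k)⁻¹)
            ?_ ?_ ?_ ?_ ?_
          · intro a ha
            exact thetaFun_mem_Efin n (Efin_inv_mem n ha)
          · intro a ha
            exact Efin_inv_mem n (thetaFun_mem_Efin n ha)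
          · intro a _
            show (thetaFun n (thetaFun n a⁻¹))⁻¹ = a
            rw [thetaFun_thetaFun n hn2, inv_inv]
          · intro a _
            show thetaFun n ((thetaFun n a)⁻¹)⁻¹ = a
            rw [inv_inv, thetaFun_thetaFun n hn2]
          · intro a _
            rfl
      _ = 1 := key1
  have : (0 : ZMod 2) = 1 := by rw [← lhs0, hmain, rhs1]
  exact absurd this (by decide)

end
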